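/- Let K be a field with char(K) ≠ 2 containing i with i² = -1, and consider the matrices A = [[i,0],[0,-i]], B = [[0,1],[-1,0]], C = (1/(2u))·[[u²+1, u²-1],[u²-1, u²+1]] (for nonzero u ∈ K), D = I in SL₂(K). Then A B A⁻¹ B⁻¹ C D C⁻¹ D⁻¹ = -I. -/

import Mathlib

open Matrix

/-- With `i² = -1` and `u ≠ 0`, the quadruple `A = [[i,0],[0,-i]]`, `B = [[0,1],[-1,0]]`,
`C = (1/(2u))·[[u²+1, u²-1],[u²-1, u²+1]]`, `D = I` satisfies
`A B A⁻¹ B⁻¹ C D C⁻¹ D⁻¹ = -I`. -/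
theorem stmt_12 (K : Type*) [Field K] (hK : ringChar K ≠ 2) (i u : K)
    (hi : i ^ 2 = -1) (hu : u ≠ 0) (A B C D : Matrix (Fin 2) (Fin 2) K)
    (hA : A = !![i, 0; 0, -i]) (hB : B = !![0, 1; -1, 0])
    (hC : C = (2 * u)⁻¹ • !![u ^ 2 + 1, u ^ 2 - 1; u ^ 2 - 1, u ^ 2 + 1])
    (hD : D = 1) :
    A * B * A⁻¹ * B⁻¹ * C * D * C⁻¹ * D⁻¹ = -1 := by
  have h2 : (2 : K) ≠ 0 := Ring.two_ne_zero hK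
  have hAinv : A⁻¹ = !![-i, 0; 0, i] := by
    apply inv_eq_right_inv
    subst hA
    ext a b
    fin_cases a <;> fin_cases b <;>
      simp [Matrix.mul_apply, Fin.sum_univ_two] <;> linear_combination -hi
  have hBinv : B⁻¹ = !![0, -1; 1, 0] := by
    apply inv_eq_right_inv
    subst hB
    ext a b
    fin_cases a <;> fin_cases b <;>
      simp [Matrix.mul_apply, Fin.sum_univ_two]
  have hCdet : C.det = 1 := by
    subst hC
    simp only [Matrix.det_fin_two, Matrix.smul_apply, Matrix.cons_val', Matrix.cons_val_zero,
      Matrix.cons_val_one, Matrix.head_cons, Matrix.head_fin_const, Matrix.empty_val',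
      Matrix.cons_val_fin_one, smul_eq_mul, Matrix.of_apply]
    field_simp
    ring
  have hCC : C * C⁻¹ = 1 := mul_nonsing_inv _ (by rw [hCdet]; exact isUnit_one)
  rw [hD, inv_one, mul_one, mul_one, mul_assoc _ C C⁻¹, hCC, mul_one, hAinv, hBinv, hA, hB]
  ext a b
  fin_cases a <;> fin_cases b <;>
    simp [Matrix.mul_apply, Fin.sum_univ_two, Matrix.one_apply] <;> first | linear_combination -hi | linear_combination hi | linear_combination (2:K) * hi | linear_combination (-2:K) * hi
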